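/- Let S be a countable ℵ₀-categorical semigroup. Then every principal factor of S is ℵ₀-categorical, and each principal factor is completely 0-simple, completely simple, or null. Moreover, S has only finitely many principal factors up to isomorphism. -/

import Mathlib

/-- Two `n`-tuples of a semigroup are automorphically equivalent if some semigroup
automorphism maps one to the other componentwise. -/
def AutRel (S : Type*) [Semigroup S] {n : ℕ} (a b : Fin n → S) : Prop :=
  ∃ φ : S ≃* S, ∀ k, φ (a k) = b k

/-- A semigroup is ℵ₀-categorical if, for every `n ≥ 1`, the action of its automorphism
group on `n`-tuples has only finitely many orbits. -/
def Aleph0Categorical (S : Type*) [Semigroup S] : Prop :=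
  ∀ n : ℕ, 1 ≤ n → ∃ t : Set (Fin n → S), t.Finite ∧
    ∀ a : Fin n → S, ∃ b ∈ t, AutRel S b a

section PrincipalFactors

variable (S : Type*) [Semigroup S]

/-- The principal two-sided ideal `J(a) = {a} ∪ aS ∪ Sa ∪ SaS` as a set. -/
def jSet (a : S) : Set S :=
  {a} ∪ {x | ∃ s, x = a * s} ∪ {x | ∃ s, x = s * a} ∪ {x | ∃ s u, x = s * a * u}

/-- The principal two-sided ideal `J(a)` as a subsemigroup. -/
def jSub (a : S) : Subsemigroup S where
  carrier := jSet S a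
  mul_mem' := by
    intro x y hx hy
    rcases hy with ((rfl | ⟨s, rfl⟩) | ⟨s, rfl⟩) | ⟨s, u, rfl⟩
    · exact Or.inl (Or.inr ⟨x, rfl⟩)
    · exact Or.inr ⟨x, s, by simp [mul_assoc]⟩
    · exact Or.inl (Or.inr ⟨x * s, by simp [mul_assoc]⟩)
    · exact Or.inr ⟨x * s, u, by simp [mul_assoc]⟩

/-- The `J`-class of `a`. -/
def jClass (a : S) : Set S := {b | jSet S b = jSet S a}

/-- `I(a) = J(a) \ J_a`. -/
def iSet (a : S) : Set S := jSet S a \ jClass S a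

/-- The Rees congruence on `J(a)`: the (smallest) congruence identifying all elements of
`I(a)` with each other. -/
def reesCon (a : S) : Con (jSub S a) :=
  conGen (fun x y : jSub S a => (x : S) ∈ iSet S a ∧ (y : S) ∈ iSet S a)

/-- The principal factor of `S` at `a`: the Rees quotient `J(a)/I(a)` (when `I(a) = ∅`
the identified relation is empty and the quotient is a copy of `J(a)` itself). -/
abbrev principalFactor (a : S) := (reesCon S a).Quotient

/-- A null semigroup: all products are equal (to a zero element). -/
def IsNullSemigroup (T : Type*) [Semigroup T] : Prop := ∃ z : T, ∀ x y : T, x * y = z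

/-- A (nonempty) two-sided ideal. -/
def IsIdeal (T : Type*) [Semigroup T] (A : Set T) : Prop :=
  A.Nonempty ∧ ∀ x ∈ A, ∀ s : T, s * x ∈ A ∧ x * s ∈ A

/-- A simple semigroup: its only ideal is the whole semigroup. -/
def IsSimple (T : Type*) [Semigroup T] : Prop :=
  ∀ A : Set T, IsIdeal T A → A = Set.univ

/-- A completely simple semigroup: simple with a primitive idempotent. -/
def IsCompletelySimple (T : Type*) [Semigroup T] : Prop :=
  IsSimple T ∧ ∃ e : T, e * e = e ∧
    ∀ f : T, f * f = f → e * f = f → f * e = f → f = e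

/-- `z` is a zero element of `T`. -/
def IsZeroElem (T : Type*) [Semigroup T] (z : T) : Prop := ∀ x : T, z * x = z ∧ x * z = z

/-- A completely 0-simple semigroup: it has a zero `z`, some product is nonzero, its only
ideals are `{z}` and `T`, and it has a primitive (nonzero) idempotent. -/
def IsCompletely0Simple (T : Type*) [Semigroup T] : Prop :=
  ∃ z : T, IsZeroElem T z ∧ (∃ x y : T, x * y ≠ z) ∧
    (∀ A : Set T, IsIdeal T A → A = {z} ∨ A = Set.univ) ∧
    ∃ e : T, e ≠ z ∧ e * e = e ∧
      ∀ f : T, f * f = f → f ≠ z → e * f = f → f * e = f → f = e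

end PrincipalFactors

section Aux
variable {S : Type*} [Semigroup S]

/-- `sp x n = x^(n+1)` in a semigroup. -/
def sp (x : S) : ℕ → S
  | 0 => x
  | n+1 => sp x n * x

lemma sp_succ (x : S) (n : ℕ) : sp x (n+1) = sp x n * x := rfl

lemma sp_succ_left (x : S) (n : ℕ) : sp x (n+1) = x * sp x n := by
  induction n with
  | zero => rfl
  | succ n ih => rw [sp_succ, ih, mul_assoc, ← sp_succ, ih]

lemma map_sp (φ : S ≃* S) (x : S) (n : ℕ) : φ (sp x n) = sp (φ x) n := by
  induction n with
  | zero => rfl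
  | succ n ih => rw [sp_succ, sp_succ, map_mul, ih]

lemma mem_jSet_iff {a x : S} :
    x ∈ jSet S a ↔ x = a ∨ (∃ s, x = a * s) ∨ (∃ s, x = s * a) ∨ (∃ s u, x = s * a * u) := by
  simp [jSet, Set.mem_union, Set.mem_setOf_eq, or_assoc]

lemma self_mem_jSet (a : S) : a ∈ jSet S a := mem_jSet_iff.2 (Or.inl rfl)

lemma mul_right_mem_jSet {a x : S} (h : x ∈ jSet S a) (s : S) : x * s ∈ jSet S a := by
  rcases mem_jSet_iff.1 h with rfl | ⟨u, rfl⟩ | ⟨u, rfl⟩ | ⟨u, v, rfl⟩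
  · exact mem_jSet_iff.2 (Or.inr (Or.inl ⟨s, rfl⟩))
  · exact mem_jSet_iff.2 (Or.inr (Or.inl ⟨u * s, by rw [mul_assoc]⟩))
  · exact mem_jSet_iff.2 (Or.inr (Or.inr (Or.inr ⟨u, s, rfl⟩)))
  · exact mem_jSet_iff.2 (Or.inr (Or.inr (Or.inr ⟨u, v * s, by rw [← mul_assoc]⟩)))

lemma mul_left_mem_jSet {a x : S} (h : x ∈ jSet S a) (s : S) : s * x ∈ jSet S a := by
  rcases mem_jSet_iff.1 h with rfl | ⟨u, rfl⟩ | ⟨u, rfl⟩ | ⟨u, v, rfl⟩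
  · exact mem_jSet_iff.2 (Or.inr (Or.inr (Or.inl ⟨s, rfl⟩)))
  · exact mem_jSet_iff.2 (Or.inr (Or.inr (Or.inr ⟨s, u, by rw [← mul_assoc]⟩)))
  · exact mem_jSet_iff.2 (Or.inr (Or.inr (Or.inl ⟨s * u, by rw [mul_assoc]⟩)))
  · exact mem_jSet_iff.2 (Or.inr (Or.inr (Or.inr ⟨s * u, v, by rw [← mul_assoc, ← mul_assoc]⟩)))

lemma jSet_subset {a x : S} (h : x ∈ jSet S a) : jSet S x ⊆ jSet S a := by
  intro y hy
  rcases mem_jSet_iff.1 hy with rfl | ⟨u, rfl⟩ | ⟨u, rfl⟩ | ⟨u, v, rfl⟩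
  · exact h
  · exact mul_right_mem_jSet h u
  · exact mul_left_mem_jSet h u
  · exact mul_right_mem_jSet (mul_left_mem_jSet h u) v

lemma sp_mem_jSet (x : S) (n : ℕ) : sp x n ∈ jSet S x := by
  induction n with
  | zero => exact self_mem_jSet x
  | succ n ih => exact mul_right_mem_jSet ih x

/-- strengthened periodicity statement -/
def Per (S : Type*) [Semigroup S] : Prop := ∀ x : S, ∃ k, 1 ≤ k ∧ sp x k * sp x k = sp x k

lemma sp_add (x : S) (m n : ℕ) : sp x (m + n + 1) = sp x m * sp x n := by
  induction n with
  | zero => rfl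
  | succ n ih => rw [show m + (n+1) + 1 = (m + n + 1) + 1 from rfl, sp_succ, ih, sp_succ, mul_assoc]

lemma monogenic_idem {x : S} {i d : ℕ} (hd : 1 ≤ d) (h : sp x i = sp x (i + d)) :
    ∃ k, 1 ≤ k ∧ sp x k * sp x k = sp x k := by
  have step : ∀ n, i ≤ n → sp x n = sp x (n + d) := by
    intro n hn
    induction n with
    | zero =>
      have : i = 0 := Nat.le_zero.1 hn
      subst this; exact h
    | succ n ih =>
      rcases Nat.lt_or_ge i (n+1) with hlt | hge
      · have hin : i ≤ n := Nat.lt_succ_iff.1 hlt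
        rw [sp_succ, ih hin, show n + 1 + d = (n + d) + 1 from by omega, sp_succ]
      · have : i = n + 1 := le_antisymm hn hge
        subst this; exact h
  have mstep : ∀ m n, i ≤ n → sp x n = sp x (n + m * d) := by
    intro m
    induction m with
    | zero => intro n _; simp
    | succ m ih =>
      intro n hn
      rw [ih n hn, show n + (m+1)*d = (n + m*d) + d from by ring,
        ← step (n + m*d) (by omega)]
  have hdi : i ≤ d * i := Nat.le_mul_of_pos_left i hd
  have hcomm : (i+2) * d = d * i + 2 * d := by ring
  refine ⟨d * i + 2 * d - 1, by omega, ?_⟩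
  set k := d * i + 2 * d - 1 with hk
  have h2 : i ≤ k := by omega
  rw [← sp_add, show k + k + 1 = k + (i+2) * d from by omega, ← mstep (i+2) k h2]

end Aux

section Stab
variable {S : Type*} [Semigroup S]

lemma per_of_cat (hcat : Aleph0Categorical S) : Per S := by
  intro x
  obtain ⟨t, tfin, ht⟩ := hcat 2 (by omega)
  -- for each i, choose a representative of the pair (x, sp x i)
  have hch : ∀ i : ℕ, ∃ b ∈ t, AutRel S b ![x, sp x i] := fun i => ht _
  choose b hb hφ using hch
  obtain ⟨i, -, j, -, hij, hbij⟩ :=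
    Set.infinite_univ.exists_ne_map_eq_of_mapsTo (fun i _ => hb i) tfin
  -- wlog i < j
  have key : ∀ i j : ℕ, i < j → b i = b j → ∃ k, 1 ≤ k ∧ sp x k * sp x k = sp x k := by
    intro i j hlt heq
    obtain ⟨φ, hφi⟩ := hφ i
    obtain ⟨ψ, hψj⟩ := hφ j
    have e0 : φ (b i 0) = x := by simpa using hφi 0
    have e1 : φ (b i 1) = sp x i := by simpa using hφi 1
    have f0 : ψ (b i 0) = x := by rw [heq]; simpa using hψj 0
    have f1 : ψ (b i 1) = sp x j := by rw [heq]; simpa using hψj 1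
    have h2 : sp x i = sp x j := by
      have h3 : ψ (φ.symm (sp x i)) = sp x j := by
        conv_lhs => rw [← e1, φ.symm_apply_apply]
        exact f1
      have h4 : ψ (φ.symm x) = x := by
        conv_lhs => rw [← e0, φ.symm_apply_apply]
        exact f0
      rw [map_sp φ.symm, map_sp ψ, h4] at h3
      exact h3
    exact monogenic_idem (d := j - i) (by omega)
      (by rw [show i + (j - i) = j from by omega]; exact h2)
  rcases Nat.lt_or_ge i j with h | h
  · exact key i j h hbij
  · exact key j i (by omega) hbij.symm

/-- right sandwich: if `x = s * (x * w)` then `x = (x*w) * v` for some `v`, or `x = x*w`. -/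
lemma sand_r (hper : Per S) {x s w : S} (h : x = s * (x * w)) :
    x = x * w ∨ ∃ v, x = (x * w) * v := by
  have claim : ∀ n, x = sp s n * (x * sp w n) := by
    intro n
    induction n with
    | zero => exact h
    | succ n ih =>
      calc x = s * (x * w) := h
      _ = s * ((sp s n * (x * sp w n)) * w) := by rw [← ih]
      _ = sp s (n+1) * (x * sp w (n+1)) := by
          rw [sp_succ_left, sp_succ, mul_assoc, mul_assoc, mul_assoc]
  obtain ⟨k, hk1, hkidem⟩ := hper s
  have hx : x = sp s k * (x * sp w k) := claim k
  have hpx : sp s k * x = x := by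
    conv_rhs => rw [hx]
    conv_lhs => rw [hx, ← mul_assoc, ← mul_assoc]
    rw [hkidem, mul_assoc]
  have hxw : x = x * sp w k := by
    conv_lhs => rw [hx, ← mul_assoc]
    rw [hpx]
  obtain ⟨k', rfl⟩ : ∃ k', k = k' + 1 := ⟨k - 1, by omega⟩
  right
  refine ⟨sp w k', ?_⟩
  conv_lhs => rw [hxw, sp_succ_left]
  rw [← mul_assoc]
end Stab

section Stab2
variable {S : Type*} [Semigroup S]

/-- left sandwich -/
lemma sand_l (hper : Per S) {x s w : S} (h : x = (w * x) * s) :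
    x = w * x ∨ ∃ v, x = v * (w * x) := by
  have claim : ∀ n, x = (sp w n * x) * sp s n := by
    intro n
    induction n with
    | zero => exact h
    | succ n ih =>
      calc x = (w * x) * s := h
      _ = (w * ((sp w n * x) * sp s n)) * s := by rw [← ih]
      _ = (sp w (n+1) * x) * sp s (n+1) := by
          rw [sp_succ_left, sp_succ, ← mul_assoc, ← mul_assoc, ← mul_assoc]
  obtain ⟨k, hk1, hkidem⟩ := hper w
  have hx : x = (sp w k * x) * sp s k := claim k
  have hpx : sp w k * x = x := by
    conv_rhs => rw [hx]
    conv_lhs => rw [hx, ← mul_assoc, ← mul_assoc, hkidem]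
  obtain ⟨k', rfl⟩ : ∃ k', k = k' + 1 := ⟨k - 1, by omega⟩
  right
  refine ⟨sp w k', ?_⟩
  conv_lhs => rw [← hpx, sp_succ]
  rw [mul_assoc]

lemma stab_r (hper : Per S) {x u : S} (h : jSet S (x * u) = jSet S x) :
    x = x * u ∨ ∃ v, x = (x * u) * v := by
  have hx : x ∈ jSet S (x * u) := h.symm ▸ self_mem_jSet x
  rcases mem_jSet_iff.1 hx with h1 | ⟨s, h1⟩ | ⟨s, h1⟩ | ⟨s, t, h1⟩
  · exact Or.inl h1
  · exact Or.inr ⟨s, h1⟩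
  · exact sand_r hper h1
  · rw [mul_assoc, mul_assoc] at h1
    rcases sand_r hper h1 with h3 | ⟨v, h3⟩
    · refine Or.inr ⟨t, ?_⟩
      rw [← mul_assoc] at h3; exact h3
    · refine Or.inr ⟨t * v, ?_⟩
      rw [← mul_assoc x u t, mul_assoc (x*u) t v] at h3; exact h3

lemma stab_l (hper : Per S) {x u : S} (h : jSet S (u * x) = jSet S x) :
    x = u * x ∨ ∃ v, x = v * (u * x) := by
  have hx : x ∈ jSet S (u * x) := h.symm ▸ self_mem_jSet x
  rcases mem_jSet_iff.1 hx with h1 | ⟨s, h1⟩ | ⟨s, h1⟩ | ⟨s, t, h1⟩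
  · exact Or.inl h1
  · exact sand_l hper h1
  · exact Or.inr ⟨s, h1⟩
  · rw [← mul_assoc s u x] at h1
    rcases sand_l hper h1 with h3 | ⟨v, h3⟩
    · refine Or.inr ⟨s, ?_⟩
      rw [mul_assoc] at h3; exact h3
    · refine Or.inr ⟨v * s, ?_⟩
      rw [mul_assoc s u x, ← mul_assoc v s (u*x)] at h3; exact h3

lemma mem_jClass_iff {a b : S} : b ∈ jClass S a ↔ jSet S b = jSet S a := Iff.rfl

lemma self_mem_jClass (a : S) : a ∈ jClass S a := rfl

lemma mem_jSet_of_mem_jClass {a b : S} (h : b ∈ jClass S a) : b ∈ jSet S a :=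
  mem_jClass_iff.1 h ▸ self_mem_jSet b

lemma idem_helper (hper : Per S) {a p w : S} (hp : p ∈ jClass S a) (hw : w ∈ jSet S a)
    (hpw : p = p * w) : ∃ e ∈ jClass S a, e * e = e := by
  have hn : ∀ n, p = p * sp w n := by
    intro n
    induction n with
    | zero => exact hpw
    | succ n ih =>
      calc p = p * w := hpw
      _ = (p * sp w n) * w := by rw [← ih]
      _ = p * sp w (n+1) := by rw [sp_succ, ← mul_assoc]
  obtain ⟨k, -, hkidem⟩ := hper w
  refine ⟨sp w k, ?_, hkidem⟩
  have h1 : jSet S (sp w k) ⊆ jSet S a := (jSet_subset hw).trans' (jSet_subset (sp_mem_jSet w k))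
  have h2 : jSet S a ⊆ jSet S (sp w k) := by
    have : p ∈ jSet S (sp w k) :=
      mem_jSet_iff.2 (Or.inr (Or.inr (Or.inl ⟨p, hn k⟩)))
    exact (mem_jClass_iff.1 hp) ▸ jSet_subset this
  exact mem_jClass_iff.2 (le_antisymm h1 h2)

lemma idem_in_jClass (hper : Per S) {a p q : S} (hp : p ∈ jClass S a) (hq : q ∈ jClass S a)
    (hpq : p * q ∈ jClass S a) : ∃ e ∈ jClass S a, e * e = e := by
  have h : jSet S (p * q) = jSet S p := (mem_jClass_iff.1 hpq).trans (mem_jClass_iff.1 hp).symm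
  rcases stab_r hper h with h1 | ⟨v, h1⟩
  · exact idem_helper hper hp (mem_jSet_of_mem_jClass hq) h1
  · exact idem_helper hper hp (mul_right_mem_jSet (mem_jSet_of_mem_jClass hq) v)
      (by rw [mul_assoc] at h1; exact h1)

end Stab2

section Reg
variable {S : Type*} [Semigroup S]

lemma reg_of_jClass (hper : Per S) {a e y : S} (he : e ∈ jClass S a) (hee : e * e = e)
    (hy : y ∈ jClass S a) : ∃ c, y = (y * c) * y := by
  have hey : e ∈ jSet S y := by
    rw [mem_jClass_iff.1 hy, ← mem_jClass_iff.1 he]; exact self_mem_jSet e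
  have hJy : jSet S y = jSet S a := mem_jClass_iff.1 hy
  have hJe : jSet S e = jSet S a := mem_jClass_iff.1 he
  rcases mem_jSet_iff.1 hey with h1 | ⟨t, h1⟩ | ⟨t, h1⟩ | ⟨t, u, h1⟩
  · -- e = y : y idempotent
    refine ⟨y, ?_⟩
    have hyy : y * y = y := by rw [h1] at hee; exact hee
    rw [hyy, hyy]
  · -- e = y * t
    have hst : jSet S (y * t) = jSet S y := by rw [← h1, hJe, hJy]
    rcases stab_r hper hst with h2 | ⟨v, h2⟩
    · -- y = y*t = e, so y idempotent
      refine ⟨y, ?_⟩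
      have hyy : y * y = y := by rw [← h2] at h1; rw [h1] at hee; exact hee
      rw [hyy, hyy]
    · -- y = e * v, whence e * y = y, i.e. y = (y*t)*y
      refine ⟨t, ?_⟩
      rw [← h1] at h2
      calc y = e * v := h2
      _ = (e * e) * v := by rw [hee]
      _ = e * (e * v) := by rw [mul_assoc]
      _ = e * y := by rw [← h2]
      _ = (y * t) * y := by rw [h1]
  · -- e = t * y
    have hst : jSet S (t * y) = jSet S y := by rw [← h1, hJe, hJy]
    rcases stab_l hper hst with h2 | ⟨v, h2⟩
    · refine ⟨y, ?_⟩
      have hyy : y * y = y := by rw [← h2] at h1; rw [h1] at hee; exact hee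
      rw [hyy, hyy]
    · -- y = v * e, whence y * e = y, i.e. y = y*(t*y) = (y*t)*y
      refine ⟨t, ?_⟩
      rw [← h1] at h2
      calc y = v * e := h2
      _ = v * (e * e) := by rw [hee]
      _ = (v * e) * e := by rw [mul_assoc]
      _ = y * e := by rw [← h2]
      _ = y * (t * y) := by rw [h1]
      _ = (y * t) * y := by rw [mul_assoc]
  · -- e = (t * y) * u
    rw [mul_assoc] at h1  -- e = t * (y * u)
    set m := y * u with hm
    have hJm : jSet S m = jSet S a := by
      have h2 : jSet S e ⊆ jSet S m := by
        apply jSet_subset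
        exact mem_jSet_iff.2 (Or.inr (Or.inr (Or.inl ⟨t, h1⟩)))
      have h3 : jSet S m ⊆ jSet S y := by
        apply jSet_subset
        exact mem_jSet_iff.2 (Or.inr (Or.inl ⟨u, hm⟩))
      exact le_antisymm (hJy ▸ h3) (hJe ▸ h2)
    -- m * e = m in all cases of stab_l
    have hme : m * e = m := by
      have hsm : jSet S (t * m) = jSet S m := by rw [← h1, hJe, hJm]
      rcases stab_l hper hsm with h2 | ⟨w, h2⟩
      · -- m = t*m = e
        have hme' : m = e := by rw [h2, ← h1]
        rw [hme', hee]
      · -- m = w * (t*m) = w * e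
        rw [← h1] at h2
        calc m * e = (w * e) * e := by rw [← h2]
        _ = w * (e * e) := by rw [mul_assoc]
        _ = w * e := by rw [hee]
        _ = m := h2.symm
    -- hence m = (m * t) * m
    have hmm : m = (m * t) * m := by
      calc m = m * e := hme.symm
      _ = m * (t * m) := by rw [h1]
      _ = (m * t) * m := (mul_assoc m t m).symm
    have hst : jSet S (y * u) = jSet S y := by rw [← hm, hJm, hJy]
    rcases stab_r hper hst with h2 | ⟨v, h2⟩
    · -- y = m
      refine ⟨t, ?_⟩
      rw [← hm] at h2
      rw [← h2] at hmm
      exact hmm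
    · -- y = m * v
      refine ⟨u * t, ?_⟩
      rw [← hm] at h2
      calc y = m * v := h2
      _ = ((m * t) * m) * v := by rw [← hmm]
      _ = (m * t) * (m * v) := by rw [mul_assoc]
      _ = (m * t) * y := by rw [← h2]
      _ = ((y * u) * t) * y := by rw [hm]
      _ = (y * (u * t)) * y := by rw [mul_assoc y u t]

lemma sandwich_jClass (hper : Per S) {a x y : S}
    (hnn : ∃ p ∈ jClass S a, ∃ q ∈ jClass S a, p * q ∈ jClass S a)
    (hx : x ∈ jClass S a) (hy : y ∈ jClass S a) :
    ∃ α ∈ jSet S a, ∃ β ∈ jSet S a, y = (α * x) * β := by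
  obtain ⟨p, hp, q, hq, hpq⟩ := hnn
  obtain ⟨e, he, hee⟩ := idem_in_jClass hper hp hq hpq
  obtain ⟨c, hc⟩ := reg_of_jClass hper he hee hy
  have hy' : y ∈ jSet S a := mem_jSet_of_mem_jClass hy
  set α0 := y * c with hα0
  set β0 := c * y with hβ0
  have hα0m : α0 ∈ jSet S a := mul_right_mem_jSet hy' c
  have hβ0m : β0 ∈ jSet S a := mul_left_mem_jSet hy' c
  have hαy : α0 * y = y := by rw [hα0, ← hc]
  have hyβ : y * β0 = y := by rw [hβ0, ← mul_assoc, ← hc]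
  have hyx : y ∈ jSet S x := by
    rw [mem_jClass_iff.1 hx, ← mem_jClass_iff.1 hy]; exact self_mem_jSet y
  rcases mem_jSet_iff.1 hyx with h1 | ⟨t, h1⟩ | ⟨t, h1⟩ | ⟨t, u, h1⟩
  · -- y = x
    refine ⟨α0, hα0m, β0, hβ0m, ?_⟩
    calc y = y * β0 := hyβ.symm
    _ = (α0 * y) * β0 := by rw [hαy]
    _ = (α0 * x) * β0 := by rw [← h1]
  · -- y = x * t
    refine ⟨α0, hα0m, t * β0, mul_left_mem_jSet hβ0m t, ?_⟩
    calc y = α0 * y := hαy.symm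
    _ = α0 * (y * β0) := by rw [hyβ]
    _ = α0 * ((x * t) * β0) := by rw [← h1]
    _ = α0 * (x * (t * β0)) := by rw [mul_assoc x t β0]
    _ = (α0 * x) * (t * β0) := (mul_assoc α0 x (t * β0)).symm
  · -- y = t * x
    refine ⟨α0 * t, mul_right_mem_jSet hα0m t, β0, hβ0m, ?_⟩
    calc y = (α0 * y) * β0 := by rw [hαy, hyβ]
    _ = (α0 * (t * x)) * β0 := by rw [← h1]
    _ = ((α0 * t) * x) * β0 := by rw [mul_assoc α0 t x]
  · -- y = (t * x) * u
    refine ⟨α0 * t, mul_right_mem_jSet hα0m t, u * β0, mul_left_mem_jSet hβ0m u, ?_⟩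
    calc y = α0 * (y * β0) := by rw [hyβ, hαy]
    _ = α0 * (((t * x) * u) * β0) := by rw [← h1]
    _ = α0 * ((t * x) * (u * β0)) := by rw [mul_assoc (t*x) u β0]
    _ = (α0 * (t * x)) * (u * β0) := (mul_assoc α0 (t*x) (u*β0)).symm
    _ = ((α0 * t) * x) * (u * β0) := by rw [mul_assoc α0 t x]

end Reg

section Rees
variable {S : Type*} [Semigroup S]

lemma iSet_mul_left {a x : S} (hx : x ∈ iSet S a) (s : S) : s * x ∈ iSet S a := by
  refine ⟨mul_left_mem_jSet hx.1 s, fun hcl => hx.2 ?_⟩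
  have h1 : jSet S (s * x) ⊆ jSet S x :=
    jSet_subset (mem_jSet_iff.2 (Or.inr (Or.inr (Or.inl ⟨s, rfl⟩))))
  have h2 : jSet S x ⊆ jSet S a := jSet_subset hx.1
  exact mem_jClass_iff.2 (le_antisymm h2 ((mem_jClass_iff.1 hcl) ▸ h1))

lemma iSet_mul_right {a x : S} (hx : x ∈ iSet S a) (s : S) : x * s ∈ iSet S a := by
  refine ⟨mul_right_mem_jSet hx.1 s, fun hcl => hx.2 ?_⟩
  have h1 : jSet S (x * s) ⊆ jSet S x :=
    jSet_subset (mem_jSet_iff.2 (Or.inr (Or.inl ⟨s, rfl⟩)))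
  have h2 : jSet S x ⊆ jSet S a := jSet_subset hx.1
  exact mem_jClass_iff.2 (le_antisymm h2 ((mem_jClass_iff.1 hcl) ▸ h1))

/-- the Rees congruence, described explicitly -/
def reesCon' (S : Type*) [Semigroup S] (a : S) : Con (jSub S a) where
  r x y := (x : S) = y ∨ ((x : S) ∈ iSet S a ∧ (y : S) ∈ iSet S a)
  iseqv := by
    refine ⟨fun x => Or.inl rfl, ?_, ?_⟩
    · rintro x y (h | ⟨h1, h2⟩)
      · exact Or.inl h.symm
      · exact Or.inr ⟨h2, h1⟩
    · rintro x y z (h | ⟨h1, h2⟩) (h' | ⟨h1', h2'⟩)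
      · exact Or.inl (h.trans h')
      · exact Or.inr ⟨h ▸ h1', h2'⟩
      · exact Or.inr ⟨h1, h'.symm ▸ h2⟩
      · exact Or.inr ⟨h1, h2'⟩
  mul' := by
    rintro w x y z (h | ⟨h1, h2⟩) (h' | ⟨h1', h2'⟩)
    · exact Or.inl (by push_cast; rw [h, h'])
    · refine Or.inr ⟨?_, ?_⟩
      · show ((w * y : jSub S a) : S) ∈ iSet S a
        push_cast; exact iSet_mul_left h1' (w : S)
      · show ((x * z : jSub S a) : S) ∈ iSet S a
        push_cast; exact iSet_mul_left h2' (x : S)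
    · refine Or.inr ⟨?_, ?_⟩
      · show ((w * y : jSub S a) : S) ∈ iSet S a
        push_cast; exact iSet_mul_right h1 (y : S)
      · show ((x * z : jSub S a) : S) ∈ iSet S a
        push_cast; exact iSet_mul_right h2 (z : S)
    · refine Or.inr ⟨?_, ?_⟩
      · show ((w * y : jSub S a) : S) ∈ iSet S a
        push_cast; exact iSet_mul_right h1 (y : S)
      · show ((x * z : jSub S a) : S) ∈ iSet S a
        push_cast; exact iSet_mul_right h2 (z : S)

lemma reesCon_eq (a : S) : reesCon S a = reesCon' S a := by
  apply le_antisymm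
  · exact Con.conGen_le.2 (fun x y h => Or.inr h)
  · intro x y h
    rcases h with h | h
    · have : x = y := Subtype.ext h
      rw [this]
      exact (reesCon S a).refl y
    · exact ConGen.Rel.of x y h

lemma reesCon_iff {a : S} (x y : jSub S a) :
    reesCon S a x y ↔ ((x : S) = y ∨ ((x : S) ∈ iSet S a ∧ (y : S) ∈ iSet S a)) := by
  rw [reesCon_eq]; rfl

end Rees

section Transport
variable {S : Type*} [Semigroup S]

lemma mem_jSet_map (φ : S ≃* S) {a x : S} (h : x ∈ jSet S a) : φ x ∈ jSet S (φ a) := by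
  rcases mem_jSet_iff.1 h with rfl | ⟨s, rfl⟩ | ⟨s, rfl⟩ | ⟨s, u, rfl⟩
  · exact self_mem_jSet _
  · exact mem_jSet_iff.2 (Or.inr (Or.inl ⟨φ s, by rw [map_mul]⟩))
  · exact mem_jSet_iff.2 (Or.inr (Or.inr (Or.inl ⟨φ s, by rw [map_mul]⟩)))
  · exact mem_jSet_iff.2 (Or.inr (Or.inr (Or.inr ⟨φ s, φ u, by rw [map_mul, map_mul]⟩)))

lemma mem_jSet_map_iff (φ : S ≃* S) {a x : S} : φ x ∈ jSet S (φ a) ↔ x ∈ jSet S a := by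
  refine ⟨fun h => ?_, mem_jSet_map φ⟩
  have := mem_jSet_map φ.symm h
  simpa using this

lemma jSet_map_eq (φ : S ≃* S) (a : S) : jSet S (φ a) = φ '' jSet S a := by
  ext y
  constructor
  · intro hy
    refine ⟨φ.symm y, ?_, by simp⟩
    have := mem_jSet_map φ.symm hy
    simpa using this
  · rintro ⟨x, hx, rfl⟩
    exact mem_jSet_map φ hx

lemma mem_jClass_map (φ : S ≃* S) {a x : S} (h : x ∈ jClass S a) : φ x ∈ jClass S (φ a) := by
  rw [mem_jClass_iff, jSet_map_eq, jSet_map_eq, mem_jClass_iff.1 h]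

lemma mem_jClass_map_iff (φ : S ≃* S) {a x : S} : φ x ∈ jClass S (φ a) ↔ x ∈ jClass S a := by
  refine ⟨fun h => ?_, mem_jClass_map φ⟩
  have := mem_jClass_map φ.symm h
  simpa using this

lemma mem_iSet_map (φ : S ≃* S) {a x : S} (h : x ∈ iSet S a) : φ x ∈ iSet S (φ a) :=
  ⟨mem_jSet_map φ h.1, fun hc => h.2 ((mem_jClass_map_iff φ).1 hc)⟩

lemma pf_transport (φ : S ≃* S) (a b : S) (hab : φ a = b) :
    ∃ ψ : principalFactor S a ≃* principalFactor S b,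
      ∀ x : jSub S a, ψ ((x : jSub S a) : (reesCon S a).Quotient)
        = ((⟨φ (x : S), hab ▸ mem_jSet_map φ x.2⟩ : jSub S b) : (reesCon S b).Quotient) := by
  subst hab
  set toF : jSub S a → jSub S (φ a) := fun x => ⟨φ (x : S), mem_jSet_map φ x.2⟩ with htoF
  set invF : jSub S (φ a) → jSub S a := fun y =>
    ⟨φ.symm (y : S), by have := mem_jSet_map φ.symm y.2; simp at this; exact this⟩ with hinvF
  have hrel : ∀ x y : jSub S a, reesCon S a x y → reesCon S (φ a) (toF x) (toF y) := by
    intro x y h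
    rw [reesCon_iff] at h ⊢
    rcases h with h | ⟨h1, h2⟩
    · exact Or.inl (by simp [htoF, h])
    · exact Or.inr ⟨mem_iSet_map φ h1, mem_iSet_map φ h2⟩
  have hrel' : ∀ x y : jSub S (φ a), reesCon S (φ a) x y → reesCon S a (invF x) (invF y) := by
    intro x y h
    rw [reesCon_iff] at h ⊢
    rcases h with h | ⟨h1, h2⟩
    · exact Or.inl (by simp [hinvF, h])
    · refine Or.inr ⟨?_, ?_⟩
      · have := mem_iSet_map φ.symm h1; simpa using this
      · have := mem_iSet_map φ.symm h2; simpa using this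
  have key : ∀ x : jSub S a, Quotient.map' toF hrel (x : (reesCon S a).Quotient)
      = ((toF x : jSub S (φ a)) : (reesCon S (φ a)).Quotient) := fun _ => rfl
  have key' : ∀ y : jSub S (φ a), Quotient.map' invF hrel' (y : (reesCon S (φ a)).Quotient)
      = ((invF y : jSub S a) : (reesCon S a).Quotient) := fun _ => rfl
  refine ⟨MulEquiv.mk' (Equiv.mk (Quotient.map' toF hrel) (Quotient.map' invF hrel') ?_ ?_) ?_, ?_⟩
  · intro q
    induction q using Con.induction_on with
    | _ x =>
      rw [key, key']
      congr 1
      exact Subtype.ext (by simp [htoF, hinvF])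
  · intro q
    induction q using Con.induction_on with
    | _ x =>
      rw [key', key]
      congr 1
      exact Subtype.ext (by simp [htoF, hinvF])
  · intro q r
    induction q using Con.induction_on with
    | _ x =>
      induction r using Con.induction_on with
      | _ y =>
        show Quotient.map' toF hrel ((x : (reesCon S a).Quotient) * (y : (reesCon S a).Quotient))
          = @HMul.hMul (reesCon S (φ a)).Quotient (reesCon S (φ a)).Quotient (reesCon S (φ a)).Quotient _
            (Quotient.map' toF hrel (x : (reesCon S a).Quotient))
            (Quotient.map' toF hrel (y : (reesCon S a).Quotient))
        rw [← Con.coe_mul, key, key, key, ← Con.coe_mul]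
        congr 1
        exact Subtype.ext (by simp [htoF])
  · intro x
    exact key x

end Transport

/-- every element of the quotient is a coercion -/
lemma pf_exists_rep {S : Type*} [Semigroup S] {a : S} (q : principalFactor S a) :
    ∃ x : jSub S a, ((x : jSub S a) : (reesCon S a).Quotient) = q := by
  induction q using Con.induction_on with
  | _ x => exact ⟨x, rfl⟩

/-- Let `S` be a countable ℵ₀-categorical semigroup.  Then every principal factor of `S`
is ℵ₀-categorical; each principal factor is null, completely simple or completely
0-simple; and `S` has only finitely many principal factors up to isomorphism. -/
theorem aleph0Categorical_principal_factors (S : Type*) [Semigroup S] [Countable S]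
    (hcat : Aleph0Categorical S) :
    (∀ a : S, Aleph0Categorical (principalFactor S a)) ∧
    (∀ a : S, IsNullSemigroup (principalFactor S a) ∨
      IsCompletelySimple (principalFactor S a) ∨
      IsCompletely0Simple (principalFactor S a)) ∧
    (∃ F : Set S, F.Finite ∧
      ∀ a : S, ∃ b ∈ F, Nonempty ((principalFactor S a) ≃* (principalFactor S b))) := by
  classical
  have hper : Per S := per_of_cat hcat
  refine ⟨?_, ?_, ?_⟩
  · -- Part 1 : each principal factor is ℵ₀-categorical
    intro a n hn
    obtain ⟨t, tfin, ht⟩ := hcat (n+1) (by omega)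
    have hex : ∀ q : principalFactor S a, ∃ x : jSub S a,
        ((x : jSub S a) : (reesCon S a).Quotient) = q := pf_exists_rep
    set rep : principalFactor S a → jSub S a := fun q => (hex q).choose with hrep
    have hrepspec : ∀ q, ((rep q : jSub S a) : (reesCon S a).Quotient) = q :=
      fun q => (hex q).choose_spec
    set L : (Fin n → principalFactor S a) → (Fin (n+1) → S) :=
      fun c => Fin.snoc (fun k => ((rep (c k) : jSub S a) : S)) a with hL
    have hLmem : ∀ c, ∃ b ∈ t, AutRel S b (L c) := fun c => ht (L c)
    set R : (Fin n → principalFactor S a) → (Fin (n+1) → S) :=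
      fun c => (hLmem c).choose with hR
    have hR1 : ∀ c, R c ∈ t := fun c => (hLmem c).choose_spec.1
    have hR2 : ∀ c, AutRel S (R c) (L c) := fun c => (hLmem c).choose_spec.2
    set g : (Fin (n+1) → S) → (Fin n → principalFactor S a) := fun b =>
      if h : ∃ c, R c = b then h.choose
      else fun _ => ((⟨a, self_mem_jSet a⟩ : jSub S a) : (reesCon S a).Quotient) with hg
    refine ⟨g '' t, tfin.image g, ?_⟩
    intro c
    refine ⟨g (R c), ⟨R c, hR1 c, rfl⟩, ?_⟩
    have hexc : ∃ c', R c' = R c := ⟨c, rfl⟩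
    have hc₀ : R (g (R c)) = R c := by
      rw [hg]; simp only [dif_pos hexc]; exact hexc.choose_spec
    set c₀ := g (R c) with hc₀def
    obtain ⟨φ₀, hφ₀⟩ := hR2 c₀
    obtain ⟨φ, hφ⟩ := hR2 c
    set χ : S ≃* S := φ₀.symm.trans φ with hχ
    have hχval : ∀ k, χ (L c₀ k) = L c k := by
      intro k
      have h1 : φ₀.symm (L c₀ k) = R c₀ k := by rw [← hφ₀ k, φ₀.symm_apply_apply]
      show φ (φ₀.symm (L c₀ k)) = L c k
      rw [h1, hc₀, hφ k]
    have hχa : χ a = a := by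
      have h1 := hχval (Fin.last n)
      rw [hL] at h1
      simpa [Fin.snoc_last] using h1
    obtain ⟨ψ, hψ⟩ := pf_transport χ a a hχa
    refine ⟨ψ, fun k => ?_⟩
    have h2 : (rep (c₀ k) : S) = L c₀ (Fin.castSucc k) := by
      rw [hL]; simp [Fin.snoc_castSucc]
    have h3 : χ ((rep (c₀ k) : jSub S a) : S) = ((rep (c k) : jSub S a) : S) := by
      rw [h2, hχval (Fin.castSucc k), hL]; simp [Fin.snoc_castSucc]
    calc ψ (c₀ k) = ψ ((rep (c₀ k) : jSub S a) : (reesCon S a).Quotient) := by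
          rw [hrepspec]
    _ = ((⟨χ ((rep (c₀ k) : jSub S a) : S), _⟩ : jSub S a) : (reesCon S a).Quotient) :=
          hψ (rep (c₀ k))
    _ = ((rep (c k) : jSub S a) : (reesCon S a).Quotient) := by
          congr 1
          exact Subtype.ext h3
    _ = c k := hrepspec (c k)
  · -- Part 2 : trichotomy
    intro a
    by_cases hnn : ∃ p ∈ jClass S a, ∃ q ∈ jClass S a, p * q ∈ jClass S a
    · -- non-null case
      obtain ⟨p, hp, q, hq, hpq⟩ := hnn
      have hnn' : ∃ p ∈ jClass S a, ∃ q ∈ jClass S a, p * q ∈ jClass S a := ⟨p, hp, q, hq, hpq⟩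
      obtain ⟨e, he, hee⟩ := idem_in_jClass hper hp hq hpq
      set E : jSub S a := ⟨e, mem_jSet_of_mem_jClass he⟩ with hE
      -- key fact about idempotents in the J-class
      have hprim : ∀ y : jSub S a, (y : S) ∈ jClass S a → (y : S) * y = y →
          e * (y : S) = y → (y : S) * e = y → (y : S) = e := by
        intro y hyJ hyy hey hye
        have hst : jSet S (e * (y : S)) = jSet S e := by
          rw [hey, mem_jClass_iff.1 hyJ, mem_jClass_iff.1 he]
        rcases stab_r hper hst with h1 | ⟨v, h1⟩
        · rw [hey] at h1; exact h1.symm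
        · rw [hey] at h1
          -- e = y * v , so y * e = y * (y*v) = (y*y)*v = y*v = e, but y*e = y
          have h2 : (y : S) * e = e := by
            calc (y : S) * e = (y : S) * ((y : S) * v) := by rw [← h1]
            _ = ((y : S) * (y : S)) * v := by rw [mul_assoc]
            _ = (y : S) * v := by rw [hyy]
            _ = e := h1.symm
          rw [← h2, hye]
      by_cases hI : ∀ w ∈ jSet S a, w ∈ jClass S a
      · -- I(a) empty : completely simple
        have hnoI : ∀ w : S, w ∉ iSet S a := fun w hw => hw.2 (hI w hw.1)
        -- quotient equalities descend to S
        have hdesc : ∀ x y : jSub S a,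
            ((x : jSub S a) : (reesCon S a).Quotient)
              = ((y : jSub S a) : (reesCon S a).Quotient) → x = y := by
          intro x y h
          rcases (reesCon_iff x y).1 ((reesCon S a).eq.1 h) with h | ⟨h1, _⟩
          · exact Subtype.ext h
          · exact absurd h1 (hnoI _)
        right; left
        constructor
        · -- simple
          intro A ⟨⟨q0, hq0⟩, habs⟩
          obtain ⟨x, hx⟩ := pf_exists_rep q0
          have hxJ : (x : S) ∈ jClass S a := hI _ x.2
          ext q'
          simp only [Set.mem_univ, iff_true]
          obtain ⟨y, hy⟩ := pf_exists_rep q'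
          have hyJ : (y : S) ∈ jClass S a := hI _ y.2
          obtain ⟨α, hα, β, hβ, hsand⟩ := sandwich_jClass hper hnn' hxJ hyJ
          have h5 : ((((⟨α, hα⟩ : jSub S a) * x) * ⟨β, hβ⟩ : jSub S a) :
              (reesCon S a).Quotient) = q' := by
            rw [← hy]
            congr 1
            exact Subtype.ext hsand.symm
          rw [← h5, Con.coe_mul, Con.coe_mul, hx]
          exact (habs _ ((habs q0 hq0 _).1) _).2
        · -- primitive idempotent
          refine ⟨((E : jSub S a) : (reesCon S a).Quotient), ?_, ?_⟩
          · rw [← Con.coe_mul]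
            congr 1
            exact Subtype.ext hee
          · intro f hff hef hfe
            obtain ⟨y, hy⟩ := pf_exists_rep f
            have hyJ : (y : S) ∈ jClass S a := hI _ y.2
            have hyy : (y : S) * y = y := by
              have h := hdesc (y * y) y (by rw [Con.coe_mul, hy, hff])
              simpa using congrArg Subtype.val h
            have hey : e * (y : S) = y := by
              have h := hdesc (E * y) y (by rw [Con.coe_mul, hy, hef])
              simpa [hE] using congrArg Subtype.val h
            have hye : (y : S) * e = y := by
              have h := hdesc (y * E) y (by rw [Con.coe_mul, hy, hfe])
              simpa [hE] using congrArg Subtype.val h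
            rw [← hy]
            congr 1
            exact Subtype.ext (hprim y hyJ hyy hey hye)
      · -- I(a) nonempty : completely 0-simple
        push_neg at hI
        obtain ⟨w₀, hw₀1, hw₀2⟩ := hI
        have hw₀ : w₀ ∈ iSet S a := ⟨hw₀1, hw₀2⟩
        set W : jSub S a := ⟨w₀, hw₀1⟩ with hW
        set z : principalFactor S a := ((W : jSub S a) : (reesCon S a).Quotient) with hz
        have hcoe_z : ∀ x : jSub S a, (x : S) ∈ iSet S a →
            ((x : jSub S a) : (reesCon S a).Quotient) = z := by
          intro x hx
          exact (reesCon S a).eq.2 ((reesCon_iff x W).2 (Or.inr ⟨hx, hw₀⟩))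
        have hcoe_nz : ∀ x : jSub S a, (x : S) ∈ jClass S a →
            ((x : jSub S a) : (reesCon S a).Quotient) ≠ z := by
          intro x hx h
          rcases (reesCon_iff x W).1 ((reesCon S a).eq.1 h) with h1 | ⟨h1, _⟩
          · have h2 : (x : S) = w₀ := h1
            exact hw₀2 (h2 ▸ hx)
          · exact h1.2 hx
        have hdesc : ∀ x y : jSub S a, (x : S) ∉ iSet S a →
            ((x : jSub S a) : (reesCon S a).Quotient)
              = ((y : jSub S a) : (reesCon S a).Quotient) → x = y := by
          intro x y hnx h
          rcases (reesCon_iff x y).1 ((reesCon S a).eq.1 h) with h | ⟨h1, _⟩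
          · exact Subtype.ext h
          · exact absurd h1 hnx
        have hzero : IsZeroElem (principalFactor S a) z := by
          intro x
          obtain ⟨y, hy⟩ := pf_exists_rep x
          constructor
          · rw [← hy, ← Con.coe_mul]
            exact hcoe_z _ (iSet_mul_right hw₀ (y : S))
          · rw [← hy, ← Con.coe_mul]
            exact hcoe_z _ (iSet_mul_left hw₀ (y : S))
        right; right
        refine ⟨z, hzero, ?_, ?_, ?_⟩
        · -- some product is nonzero
          set P : jSub S a := ⟨p, mem_jSet_of_mem_jClass hp⟩
          set Q : jSub S a := ⟨q, mem_jSet_of_mem_jClass hq⟩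
          refine ⟨((P : jSub S a) : (reesCon S a).Quotient),
            ((Q : jSub S a) : (reesCon S a).Quotient), ?_⟩
          rw [← Con.coe_mul]
          exact hcoe_nz (P * Q) hpq
        · -- ideals
          intro A ⟨⟨q0, hq0⟩, habs⟩
          have hzA : z ∈ A := by
            have := (habs q0 hq0 z).1
            rwa [(hzero q0).1] at this
          by_cases hA : A = {z}
          · exact Or.inl hA
          · right
            have hq1 : ∃ q1 ∈ A, q1 ≠ z := by
              by_contra h'
              push_neg at h'
              exact hA (le_antisymm h' (by simpa using hzA))
            obtain ⟨q1, hq1A, hq1z⟩ := hq1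
            obtain ⟨x, hx⟩ := pf_exists_rep q1
            have hxJ : (x : S) ∈ jClass S a := by
              by_contra hxI
              exact hq1z (hx ▸ hcoe_z x ⟨x.2, hxI⟩)
            ext q'
            simp only [Set.mem_univ, iff_true]
            obtain ⟨y, hy⟩ := pf_exists_rep q'
            by_cases hyJ : (y : S) ∈ jClass S a
            · obtain ⟨α, hα, β, hβ, hsand⟩ := sandwich_jClass hper hnn' hxJ hyJ
              have h5 : ((((⟨α, hα⟩ : jSub S a) * x) * ⟨β, hβ⟩ : jSub S a) :
                  (reesCon S a).Quotient) = q' := by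
                rw [← hy]
                congr 1
                exact Subtype.ext hsand.symm
              rw [← h5, Con.coe_mul, Con.coe_mul, hx]
              exact (habs _ ((habs q1 hq1A _).1) _).2
            · rw [← hy, hcoe_z y ⟨y.2, hyJ⟩]
              exact hzA
        · -- primitive idempotent
          refine ⟨((E : jSub S a) : (reesCon S a).Quotient), hcoe_nz E he, ?_, ?_⟩
          · rw [← Con.coe_mul]
            congr 1
            exact Subtype.ext hee
          · intro f hff hfz hef hfe
            obtain ⟨y, hy⟩ := pf_exists_rep f
            have hyJ : (y : S) ∈ jClass S a := by
              by_contra hyI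
              exact hfz (hy ▸ hcoe_z y ⟨y.2, hyI⟩)
            have hyyni : ((y * y : jSub S a) : S) ∉ iSet S a := by
              intro hIm
              apply hfz
              rw [← hff, ← hy, ← Con.coe_mul]
              exact hcoe_z _ hIm
            have heyni : ((E * y : jSub S a) : S) ∉ iSet S a := by
              intro hIm
              apply hfz
              rw [← hef, ← hy, ← Con.coe_mul]
              exact hcoe_z _ hIm
            have hyeni : ((y * E : jSub S a) : S) ∉ iSet S a := by
              intro hIm
              apply hfz
              rw [← hfe, ← hy, ← Con.coe_mul]
              exact hcoe_z _ hIm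
            have hyy : (y : S) * y = y := by
              have h := hdesc (y * y) y hyyni (by rw [Con.coe_mul, hy, hff])
              simpa using congrArg Subtype.val h
            have hey : e * (y : S) = y := by
              have h := hdesc (E * y) y heyni (by rw [Con.coe_mul, hy, hef])
              simpa [hE] using congrArg Subtype.val h
            have hye : (y : S) * e = y := by
              have h := hdesc (y * E) y hyeni (by rw [Con.coe_mul, hy, hfe])
              simpa [hE] using congrArg Subtype.val h
            rw [← hy]
            congr 1
            exact Subtype.ext (hprim y hyJ hyy hey hye)
    · -- null case
      left
      have haa : a * a ∈ iSet S a := by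
        refine ⟨mem_jSet_iff.2 (Or.inr (Or.inl ⟨a, rfl⟩)), fun hc => hnn ?_⟩
        exact ⟨a, self_mem_jClass a, a, self_mem_jClass a, hc⟩
      set Z : jSub S a := ⟨a * a, haa.1⟩ with hZ
      refine ⟨((Z : jSub S a) : (reesCon S a).Quotient), ?_⟩
      intro x y
      obtain ⟨u, hu⟩ := pf_exists_rep x
      obtain ⟨v, hv⟩ := pf_exists_rep y
      have hprod : (u : S) * v ∈ iSet S a := by
        by_cases huJ : (u : S) ∈ jClass S a
        · by_cases hvJ : (v : S) ∈ jClass S a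
          · refine ⟨(jSub S a).mul_mem u.2 v.2, fun hc => hnn ?_⟩
            exact ⟨u, huJ, v, hvJ, hc⟩
          · exact iSet_mul_left ⟨v.2, hvJ⟩ (u : S)
        · exact iSet_mul_right ⟨u.2, huJ⟩ (v : S)
      rw [← hu, ← hv, ← Con.coe_mul]
      exact (reesCon S a).eq.2 ((reesCon_iff (u * v) Z).2 (Or.inr ⟨hprod, haa⟩))
  · -- Part 3 : finitely many principal factors up to isomorphism
    obtain ⟨t, tfin, ht⟩ := hcat 1 le_rfl
    refine ⟨(fun f => f 0) '' t, tfin.image _, ?_⟩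
    intro a
    obtain ⟨b, hb, φ, hφ⟩ := ht (fun _ => a)
    obtain ⟨ψ, -⟩ := pf_transport φ (b 0) a (hφ 0)
    exact ⟨b 0, ⟨b, hb, rfl⟩, ⟨ψ.symm⟩⟩
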